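/- Conversely, in the Exact Cover reduction: suppose for each S_j ∈ F we pick a multiset A_j = S_j (as colors from U) or a count |S_j| of filler color, and the combined colored multiset—together with base counts of 2m+1+σ−n for each color i ∈ U and 2m+2 for the filler color—is balance-fair over the palette U ∪ {filler}. Then the picked A-sides have total size exactly n and each element color appears exactly once among the picked A-sides; i.e., {S_j : A-side picked} is an exact cover of U. -/
import Mathlib


/-- Converse direction of the Exact Cover reduction: if the combined colored
multiset (base counts `2m+1+σ-n` for each element color, `2m+2` for the
filler color, plus the contributions of the chosen `A`-sides and unchosen
`B`-sides) is balance-fair, then the chosen sets form an exact cover. -/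
theorem stmt_13 (n m : ℕ) (S : Fin m → Finset (Fin n)) (F' : Finset (Fin m))
    (σ : ℤ) (hσ : σ = ∑ j, ((S j).card : ℤ))
    (cnt : Fin n → ℤ)
    (hcnt : ∀ i : Fin n,
      cnt i = (2 * m + 1) + σ - n + ((F'.filter fun j => i ∈ S j).card : ℤ))
    (filler : ℤ)
    (hfiller : filler = (2 * m + 2) + ∑ j ∈ F'ᶜ, ((S j).card : ℤ))
    (hbf₁ : ∀ i j : Fin n, cnt i ≤ cnt j + 1)
    (hbf₂ : ∀ i : Fin n, cnt i ≤ filler + 1 ∧ filler ≤ cnt i + 1) :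
    ∀ x : Fin n, ∃! j : Fin m, j ∈ F' ∧ x ∈ S j := by
  intro x
  set c : Fin n → ℤ := fun i => ((F'.filter fun j => i ∈ S j).card : ℤ) with hc
  set A : ℤ := ∑ j ∈ F', ((S j).card : ℤ) with hA
  -- double counting
  have key : ∑ i : Fin n, c i = A := by
    simp only [hc, hA, Finset.card_filter]
    push_cast
    rw [Finset.sum_comm]
    congr 1
    ext j
    rw [Finset.card_eq_sum_ones (S j)]
    push_cast
    rw [Finset.sum_ite_mem, Finset.univ_inter]
  have hsplit : σ = A + ∑ j ∈ F'ᶜ, ((S j).card : ℤ) := by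
    rw [hσ, hA, Finset.sum_add_sum_compl]
  -- pointwise bounds
  have h1 : ∀ i, c i ≤ (n : ℤ) + 2 - A := by
    intro i
    have := (hbf₂ i).1
    rw [hcnt i, hfiller] at this
    have hc' : (((F'.filter fun j => i ∈ S j).card : ℤ)) = c i := rfl
    rw [hc'] at this
    linarith [hsplit]
  have h2 : ∀ i, (n : ℤ) - A ≤ c i := by
    intro i
    have := (hbf₂ i).2
    rw [hcnt i, hfiller] at this
    have hc' : (((F'.filter fun j => i ∈ S j).card : ℤ)) = c i := rfl
    rw [hc'] at this
    linarith [hsplit]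
  have h3 : ∀ i j, c i ≤ c j + 1 := by
    intro i j
    have := hbf₁ i j
    rw [hcnt i, hcnt j] at this
    have hci : (((F'.filter fun j' => i ∈ S j').card : ℤ)) = c i := rfl
    have hcj : (((F'.filter fun j' => j ∈ S j').card : ℤ)) = c j := rfl
    rw [hci, hcj] at this
    linarith
  have hn : 0 < n := Fin.pos x
  have hcard : (Finset.univ : Finset (Fin n)).card = n := by simp
  -- sum bounds
  have hub : A ≤ (n : ℤ) * ((n : ℤ) + 2 - A) := by
    calc A = ∑ i : Fin n, c i := key.symm
    _ ≤ ∑ _i : Fin n, ((n : ℤ) + 2 - A) := Finset.sum_le_sum fun i _ => h1 i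
    _ = (n : ℤ) * ((n : ℤ) + 2 - A) := by
        rw [Finset.sum_const, hcard]; ring
  have hlb : (n : ℤ) * ((n : ℤ) - A) ≤ A := by
    calc (n : ℤ) * ((n : ℤ) - A) = ∑ _i : Fin n, ((n : ℤ) - A) := by
          rw [Finset.sum_const, hcard]; ring
    _ ≤ ∑ i : Fin n, c i := Finset.sum_le_sum fun i _ => h2 i
    _ = A := key
  have hnZ : (1 : ℤ) ≤ (n : ℤ) := by exact_mod_cast hn
  have hAn : A = (n : ℤ) := by nlinarith
  have hsum : ∑ i : Fin n, c i = (n : ℤ) := by rw [key, hAn]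
  have hx0 : 0 ≤ c x := by have := h2 x; omega
  have hx2 : c x ≤ 2 := by have := h1 x; omega
  -- show c x = 1
  have hcx : c x = 1 := by
    by_contra hne
    have herase : ∑ i ∈ Finset.univ.erase x, c i + c x = (n : ℤ) := by
      rw [Finset.sum_erase_add _ _ (Finset.mem_univ x), hsum]
    have hcarde : (Finset.univ.erase x).card = n - 1 := by
      rw [Finset.card_erase_of_mem (Finset.mem_univ x), hcard]
    rcases lt_or_gt_of_ne hne with hlt | hgt
    · -- c x = 0, all others ≤ 1
      have hx : c x = 0 := by omega
      have hle : ∑ i ∈ Finset.univ.erase x, c i ≤ ∑ _i ∈ Finset.univ.erase x, (1 : ℤ) :=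
        Finset.sum_le_sum fun i _ => by have := h3 i x; omega
      rw [Finset.sum_const, hcarde, nsmul_eq_mul, mul_one] at hle
      omega
    · -- c x ≥ 2, all others ≥ 1
      have hx : c x = 2 := by omega
      have hge : ∑ _i ∈ Finset.univ.erase x, (1 : ℤ) ≤ ∑ i ∈ Finset.univ.erase x, c i :=
        Finset.sum_le_sum fun i _ => by have := h3 x i; omega
      rw [Finset.sum_const, hcarde, nsmul_eq_mul, mul_one] at hge
      omega
  -- conclude
  have hcard1 : (F'.filter fun j => x ∈ S j).card = 1 := by
    have : ((F'.filter fun j => x ∈ S j).card : ℤ) = 1 := hcx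
    exact_mod_cast this
  obtain ⟨a, ha⟩ := Finset.card_eq_one.mp hcard1
  refine ⟨a, ?_, ?_⟩
  · have : a ∈ F'.filter fun j => x ∈ S j := by rw [ha]; exact Finset.mem_singleton_self a
    exact (Finset.mem_filter.mp this).imp id (fun h => h)
  · intro j hj
    have : j ∈ F'.filter fun j => x ∈ S j := Finset.mem_filter.mpr hj
    rw [ha, Finset.mem_singleton] at this
    exact this
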